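/- Let w > 0, let s ≥ 4 be an even integer, and let γ ⊆ [0,w] be a finite set with exactly s elements. Then d*(γ) + (s/2 − 1)·d⁺(γ) ≤ w. In particular, d⁺(γ) ≤ 2w/(s−2), and if d*(γ) ≥ v₁ for some v₁ ≥ 0 then d⁺(γ) ≤ (2w − 2v₁)/(s−2). -/
import Mathlib


open scoped BigOperators Classical

/-- A standard interleaved lattice in dimension `p`: an additive subgroup of `ℤ^p`
containing `(2ℤ)^p` whose projection onto every coordinate is all of `ℤ`. -/
def IsStdIL (p : ℕ) (L : AddSubgroup (Fin p → ℤ)) : Prop :=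
  (∀ x : Fin p → ℤ, (∀ k, (2 : ℤ) ∣ x k) → x ∈ L) ∧
  (∀ (k : Fin p) (z : ℤ), ∃ x ∈ L, x k = z)

/-- `B(𝓛,s,u) = {x + u : x ∈ 𝓛} ∩ ∏_k {0,1,…,s_k−1}`. -/
def latticeBox (p : ℕ) (L : AddSubgroup (Fin p → ℤ)) (s : Fin p → ℕ)
    (u : Fin p → ℤ) : Set (Fin p → ℤ) :=
  {y | y - u ∈ L ∧ ∀ k, 0 ≤ y k ∧ y k < (s k : ℤ)}

/-- `m(𝓛,s,u)`, the cardinality of `B(𝓛,s,u)`. -/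
noncomputable def latticeSize (p : ℕ) (L : AddSubgroup (Fin p → ℤ)) (s : Fin p → ℕ)
    (u : Fin p → ℤ) : ℕ :=
  (latticeBox p L s u).ncard

/-- The `i`-th smallest element (0-indexed) of a finite set of reals. -/
noncomputable def nthLevel (γ : Finset ℝ) (i : ℕ) : ℝ :=
  (γ.sort (· ≤ ·)).getD i 0

/-- The interleaved lattice-based design
`D(𝓛,s,𝒴,u) = {(𝒴_{1(i_1)},…,𝒴_{p(i_p)}) : (i_1−1,…,i_p−1) ∈ B(𝓛,s,u)} ⊆ ℝ^p`. -/
noncomputable def design (p : ℕ) (L : AddSubgroup (Fin p → ℤ)) (s : Fin p → ℕ)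
    (Y : Fin p → Finset ℝ) (u : Fin p → ℤ) : Set (EuclideanSpace ℝ (Fin p)) :=
  {v | ∃ y ∈ latticeBox p L s u, ∀ k, v k = nthLevel (Y k) (y k).toNat}

/-- `d*(γ)`: minimum gap between adjacent elements of `γ`. -/
noncomputable def dstar (γ : Finset ℝ) : ℝ :=
  ⨅ i : Fin (γ.card - 1), (nthLevel γ (i.1 + 1) - nthLevel γ i.1)

/-- `d⁺(γ)`: minimum gap between elements two positions apart in `γ`. -/
noncomputable def dplus (γ : Finset ℝ) : ℝ :=
  ⨅ i : Fin (γ.card - 2), (nthLevel γ (i.1 + 2) - nthLevel γ i.1)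

lemma nthLevel_mem (γ : Finset ℝ) (i : ℕ) (h : i < γ.card) : nthLevel γ i ∈ γ := by
  unfold nthLevel
  have hl : i < (γ.sort (· ≤ ·)).length := by rwa [Finset.length_sort]
  rw [List.getD_eq_getElem _ _ hl]
  exact (Finset.mem_sort _).mp (List.getElem_mem _)

lemma nthLevel_le (γ : Finset ℝ) {i j : ℕ} (hij : i ≤ j) (hj : j < γ.card) :
    nthLevel γ i ≤ nthLevel γ j := by
  unfold nthLevel
  have hl : j < (γ.sort (· ≤ ·)).length := by rwa [Finset.length_sort]
  have hi : i < (γ.sort (· ≤ ·)).length := lt_of_le_of_lt hij hl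
  rw [List.getD_eq_getElem _ _ hl, List.getD_eq_getElem _ _ hi]
  exact (γ.pairwise_sort (· ≤ ·)).rel_get_of_le hij


/-- for even `s ≥ 4` and any size-`s` subset `γ` of `[0,w]`,
`d*(γ) + (s/2 − 1)·d⁺(γ) ≤ w`; in particular `d⁺(γ) ≤ 2w/(s−2)` and,
if `d*(γ) ≥ v₁ ≥ 0`, then `d⁺(γ) ≤ (2w − 2v₁)/(s−2)`. -/
theorem stmt_10 (w : ℝ) (hw : 0 < w) (s : ℕ) (hs : 4 ≤ s) (heven : Even s)
    (γ : Finset ℝ) (hγ : ↑γ ⊆ Set.Icc (0 : ℝ) w) (hcard : γ.card = s) :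
    dstar γ + ((s : ℝ) / 2 - 1) * dplus γ ≤ w ∧
    dplus γ ≤ 2 * w / ((s : ℝ) - 2) ∧
    (∀ v1 : ℝ, 0 ≤ v1 → v1 ≤ dstar γ → dplus γ ≤ (2 * w - 2 * v1) / ((s : ℝ) - 2)) := by
  obtain ⟨t, ht⟩ := heven
  set m : ℕ := s / 2 - 1 with hm
  have hms : 2 * m + 2 = s := by omega
  have hm1 : 1 ≤ m := by omega
  have hsr : (s : ℝ) = 2 * (m : ℝ) + 2 := by exact_mod_cast hms.symm
  have hcast : (s : ℝ) / 2 - 1 = (m : ℝ) := by rw [hsr]; ring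
  have hbdd1 : BddBelow (Set.range fun i : Fin (γ.card - 1) =>
      nthLevel γ (i.1 + 1) - nthLevel γ i.1) := (Set.finite_range _).bddBelow
  have hbdd2 : BddBelow (Set.range fun i : Fin (γ.card - 2) =>
      nthLevel γ (i.1 + 2) - nthLevel γ i.1) := (Set.finite_range _).bddBelow
  have hdstar : dstar γ ≤ nthLevel γ 1 - nthLevel γ 0 :=
    ciInf_le hbdd1 ⟨0, by omega⟩
  have hdplus : ∀ i : ℕ, i < s - 2 → dplus γ ≤ nthLevel γ (i + 2) - nthLevel γ i :=
    fun i h => ciInf_le hbdd2 ⟨i, by omega⟩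
  have hdstar_nonneg : 0 ≤ dstar γ := by
    haveI : Nonempty (Fin (γ.card - 1)) := ⟨⟨0, by omega⟩⟩
    apply le_ciInf
    intro i
    have := nthLevel_le γ (Nat.le_succ i.1) (by have := i.2; omega)
    linarith
  have hsum : (m : ℝ) * dplus γ ≤ nthLevel γ (s - 1) - nthLevel γ 1 := by
    have htel : ∑ j ∈ Finset.range m,
        (nthLevel γ (2 * (j + 1) + 1) - nthLevel γ (2 * j + 1))
        = nthLevel γ (2 * m + 1) - nthLevel γ (2 * 0 + 1) :=
      Finset.sum_range_sub (fun j => nthLevel γ (2 * j + 1)) m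
    have hle : (m : ℝ) * dplus γ ≤ ∑ j ∈ Finset.range m,
        (nthLevel γ (2 * (j + 1) + 1) - nthLevel γ (2 * j + 1)) := by
      have : (m : ℝ) * dplus γ = ∑ _j ∈ Finset.range m, dplus γ := by
        rw [Finset.sum_const, nsmul_eq_mul, Finset.card_range]
      rw [this]
      apply Finset.sum_le_sum
      intro j hj
      have hjm : j < m := Finset.mem_range.mp hj
      have hidx : 2 * (j + 1) + 1 = (2 * j + 1) + 2 := by ring
      rw [hidx]
      exact hdplus (2 * j + 1) (by omega)
    have h1 : nthLevel γ (2 * m + 1) = nthLevel γ (s - 1) := by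
      congr 1; omega
    rw [htel, h1] at hle
    simpa using hle
  have hmem0 := hγ (nthLevel_mem γ 0 (by omega))
  have hmemw := hγ (nthLevel_mem γ (s - 1) (by omega))
  have h0 : 0 ≤ nthLevel γ 0 := hmem0.1
  have hww : nthLevel γ (s - 1) ≤ w := hmemw.2
  have main : dstar γ + (m : ℝ) * dplus γ ≤ w := by linarith
  have hpos : (0 : ℝ) < 2 * (m : ℝ) := by positivity
  have hs2 : (s : ℝ) - 2 = 2 * (m : ℝ) := by linarith
  refine ⟨by rw [hcast]; exact main, ?_, ?_⟩
  · rw [hs2, le_div_iff₀ hpos]; nlinarith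
  · intro v1 _ hv1; rw [hs2, le_div_iff₀ hpos]; nlinarith
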